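/- For d ≥ 1, the odd parity polytope P_{d,odd} := conv{x ∈ {0,1}^d : Σᵢ xᵢ is odd} equals the set {x ∈ [0,1]^d : Σ_{i∈V} xᵢ - Σ_{i∉V} xᵢ ≤ |V| - 1 for all V ⊆ {1,…,d} with |V| even}. -/

import Mathlib

open Finset

/-- Squared Euclidean distance on `Fin d → ℝ`. -/
noncomputable def sqdist {d : ℕ} (x y : Fin d → ℝ) : ℝ := ∑ i, (x i - y i) ^ 2

/-- `z` is the Euclidean (nearest-point) projection of `x` onto `S`. -/
def IsProj {d : ℕ} (S : Set (Fin d → ℝ)) (x z : Fin d → ℝ) : Prop :=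
  z ∈ S ∧ ∀ y ∈ S, sqdist x z ≤ sqdist x y

/-- The even parity polytope: convex hull of 0/1 vectors with an even number of ones. -/
noncomputable def PEven (d : ℕ) : Set (Fin d → ℝ) :=
  convexHull ℝ {x | ∃ S : Finset (Fin d), Even S.card ∧ ∀ i, x i = if i ∈ S then 1 else 0}

/-- The odd parity polytope: convex hull of 0/1 vectors with an odd number of ones. -/
noncomputable def POdd (d : ℕ) : Set (Fin d → ℝ) :=
  convexHull ℝ {x | ∃ S : Finset (Fin d), Odd S.card ∧ ∀ i, x i = if i ∈ S then 1 else 0}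

lemma parity_core {d : ℕ} (hd : 1 ≤ d) (c x : Fin d → ℝ)
    (hb : ∀ i, 0 ≤ x i ∧ x i ≤ 1)
    (hcon : ∀ V : Finset (Fin d), Even V.card →
      ∑ i ∈ V, x i - ∑ i ∈ Vᶜ, x i ≤ (V.card : ℝ) - 1) :
    ∃ S : Finset (Fin d), Odd S.card ∧ ∑ i, c i * x i ≤ ∑ i ∈ S, c i := by
  classical
  set P : Finset (Fin d) := univ.filter (fun i => 0 < c i) with hP
  have hPmem : ∀ i, i ∈ P ↔ 0 < c i := by intro i; simp [hP]
  have hPc : ∀ i, i ∈ Pᶜ ↔ c i ≤ 0 := by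
    intro i; simp [Finset.mem_compl, hP, not_lt]
  have hsplit : ∑ i, c i * x i = ∑ i ∈ P, c i * x i + ∑ i ∈ Pᶜ, c i * x i :=
    (Finset.sum_add_sum_compl P _).symm
  by_cases hpar : Odd P.card
  · refine ⟨P, hpar, ?_⟩
    have h1 : ∑ i ∈ P, c i * x i ≤ ∑ i ∈ P, c i := by
      refine Finset.sum_le_sum fun i hi => ?_
      have hci : 0 < c i := (hPmem i).mp hi
      nlinarith [(hb i).2]
    have h2 : ∑ i ∈ Pᶜ, c i * x i ≤ 0 := by
      refine Finset.sum_nonpos fun i hi => ?_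
      have hci : c i ≤ 0 := (hPc i).mp hi
      have := (hb i).1
      nlinarith
    linarith [hsplit]
  · have heven : Even P.card := Nat.not_odd_iff_even.mp hpar
    have hne : (Finset.univ : Finset (Fin d)).Nonempty := ⟨⟨0, hd⟩, Finset.mem_univ _⟩
    obtain ⟨j, -, hj⟩ := Finset.exists_min_image Finset.univ (fun i => |c i|) hne
    have hjall : ∀ i, |c j| ≤ |c i| := fun i => hj i (Finset.mem_univ i)
    set μ := |c j| with hμ
    have hμ0 : 0 ≤ μ := abs_nonneg _
    -- key inequality
    have hgap : (1 : ℝ) ≤ (P.card : ℝ) - ∑ i ∈ P, x i + ∑ i ∈ Pᶜ, x i := by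
      have := hcon P heven
      linarith
    have hA : ∑ i ∈ P, c i * x i ≤ ∑ i ∈ P, (c i - μ * (1 - x i)) := by
      refine Finset.sum_le_sum fun i hi => ?_
      have hci : 0 < c i := (hPmem i).mp hi
      have hμi : μ ≤ c i := le_trans (hjall i) (le_of_eq (abs_of_pos hci))
      nlinarith [(hb i).2]
    have hB : ∑ i ∈ Pᶜ, c i * x i ≤ ∑ i ∈ Pᶜ, (-μ * x i) := by
      refine Finset.sum_le_sum fun i hi => ?_
      have hci : c i ≤ 0 := (hPc i).mp hi
      have hμi : c i ≤ -μ := by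
        have := hjall i
        rw [abs_of_nonpos hci] at this
        linarith
      nlinarith [(hb i).1]
    have e1 : ∑ i ∈ P, (c i - μ * (1 - x i))
        = ∑ i ∈ P, c i - μ * ((P.card : ℝ) - ∑ i ∈ P, x i) := by
      rw [Finset.sum_sub_distrib, ← Finset.mul_sum, Finset.sum_sub_distrib,
        Finset.sum_const, nsmul_eq_mul, mul_one]
    have e2 : ∑ i ∈ Pᶜ, (-μ * x i) = -(μ * ∑ i ∈ Pᶜ, x i) := by
      rw [← Finset.mul_sum, neg_mul]
    have hprod : μ * 1 ≤ μ * ((P.card : ℝ) - ∑ i ∈ P, x i + ∑ i ∈ Pᶜ, x i) :=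
      mul_le_mul_of_nonneg_left hgap hμ0
    have hkey : ∑ i, c i * x i ≤ ∑ i ∈ P, c i - μ := by
      rw [hsplit]
      have := add_le_add hA hB
      rw [e1, e2] at this
      nlinarith
    by_cases hj' : 0 < c j
    · -- j ∈ P, remove it
      have hjP : j ∈ P := (hPmem j).mpr hj'
      have hcard : 1 ≤ P.card := Finset.card_pos.mpr ⟨j, hjP⟩
      refine ⟨P.erase j, ?_, ?_⟩
      · rw [Finset.card_erase_of_mem hjP]
        exact Nat.Even.sub_odd hcard heven odd_one
      · have : ∑ i ∈ P.erase j, c i + c j = ∑ i ∈ P, c i :=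
          Finset.sum_erase_add P c hjP
        have hcj : c j = μ := (abs_of_pos hj').symm
        linarith [hkey]
    · -- j ∉ P, add it
      have hjP : j ∉ P := fun h => hj' ((hPmem j).mp h)
      refine ⟨insert j P, ?_, ?_⟩
      · rw [Finset.card_insert_of_notMem hjP]
        exact Even.add_one heven
      · rw [Finset.sum_insert hjP]
        have hcj : c j = -μ := by
          rw [hμ, abs_of_nonpos (not_lt.mp hj')]; ring
        linarith [hkey]

theorem odd_parity_polytope_description (d : ℕ) (hd : 1 ≤ d) :
    POdd d = {x : Fin d → ℝ | (∀ i, 0 ≤ x i ∧ x i ≤ 1) ∧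
      ∀ V : Finset (Fin d), Even V.card →
        ∑ i ∈ V, x i - ∑ i ∈ Vᶜ, x i ≤ (V.card : ℝ) - 1} := by
  classical
  apply Set.Subset.antisymm
  · -- easy direction
    rw [POdd]
    apply convexHull_min
    · rintro y ⟨S, hS, hy⟩
      constructor
      · intro i; rw [hy i]; split <;> norm_num
      · intro V hV
        have h1 : ∑ i ∈ V, y i = ((V ∩ S).card : ℝ) := by
          simp only [hy]
          rw [Finset.sum_ite_mem]
          simp
        have h2 : ∑ i ∈ Vᶜ, y i = ((Vᶜ ∩ S).card : ℝ) := by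
          simp only [hy]
          rw [Finset.sum_ite_mem]
          simp
        rw [h1, h2]
        have hc1 : (V ∩ S).card ≤ V.card := Finset.card_le_card Finset.inter_subset_left
        by_cases hcs : (Vᶜ ∩ S).Nonempty
        · have : 1 ≤ (Vᶜ ∩ S).card := Finset.card_pos.mpr hcs
          have : (1 : ℝ) ≤ ((Vᶜ ∩ S).card : ℝ) := by exact_mod_cast this
          have : ((V ∩ S).card : ℝ) ≤ (V.card : ℝ) := by exact_mod_cast hc1
          linarith
        · have hempty : Vᶜ ∩ S = ∅ := Finset.not_nonempty_iff_eq_empty.mp hcs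
          have hSV : S ⊆ V := by
            intro i hi
            by_contra hiV
            have : i ∈ Vᶜ ∩ S := Finset.mem_inter.mpr ⟨Finset.mem_compl.mpr hiV, hi⟩
            simp [hempty] at this
          have hVS : V ∩ S = S := by
            apply Finset.inter_eq_right.mpr hSV
          rw [hVS, hempty]
          have hlt : S.card + 1 ≤ V.card := by
            obtain ⟨a, ha⟩ := hS
            obtain ⟨b, hb⟩ := hV
            have := Finset.card_le_card hSV
            omega
          have : ((S.card : ℝ) + 1) ≤ (V.card : ℝ) := by exact_mod_cast hlt
          linarith
    · -- convexity
      intro p hp q hq a b ha hb hab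
      obtain ⟨hp1, hp2⟩ := hp
      obtain ⟨hq1, hq2⟩ := hq
      constructor
      · intro i
        have h1 := hp1 i
        have h2 := hq1 i
        simp only [Pi.add_apply, Pi.smul_apply, smul_eq_mul]
        constructor <;> nlinarith [h1.1, h1.2, h2.1, h2.2]
      · intro V hV
        have h1 := hp2 V hV
        have h2 := hq2 V hV
        simp only [Pi.add_apply, Pi.smul_apply, smul_eq_mul]
        rw [Finset.sum_add_distrib, Finset.sum_add_distrib,
          ← Finset.mul_sum, ← Finset.mul_sum, ← Finset.mul_sum, ← Finset.mul_sum]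
        nlinarith [mul_le_mul_of_nonneg_left h1 ha, mul_le_mul_of_nonneg_left h2 hb]
  · -- hard direction
    intro x hx
    by_contra hxP
    rw [POdd] at hxP
    set K : Set (Fin d → ℝ) :=
      {x | ∃ S : Finset (Fin d), Odd S.card ∧ ∀ i, x i = if i ∈ S then 1 else 0} with hK
    have hKfin : K.Finite := by
      have hsub : K ⊆ (fun S : Finset (Fin d) => fun i => if i ∈ S then (1:ℝ) else 0) ''
          Set.univ := by
        rintro y ⟨S, -, hy⟩
        exact ⟨S, trivial, (funext fun i => (hy i).symm)⟩
      exact ((Set.finite_univ).image _).subset hsub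
    obtain ⟨f, u, hfa, hfx⟩ :=
      geometric_hahn_banach_closed_point (convex_convexHull ℝ K) (hKfin.isClosed_convexHull (𝕜 := ℝ)) hxP
    have hf : ∀ y : Fin d → ℝ, f y = ∑ i, y i * f (fun j => if i = j then 1 else 0) := by
      intro y
      conv_lhs => rw [pi_eq_sum_univ y, map_sum]
      simp [smul_eq_mul]
    obtain ⟨S, hS, hle⟩ := parity_core hd (fun i => f (fun j => if i = j then 1 else 0)) x
      hx.1 hx.2
    set v : Fin d → ℝ := fun i => if i ∈ S then 1 else 0 with hv
    have hvK : v ∈ K := ⟨S, hS, fun i => rfl⟩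
    have h1 : f v = ∑ i ∈ S, f (fun j => if i = j then 1 else 0) := by
      rw [hf v]
      rw [show ∑ i, v i * f (fun j => if i = j then 1 else 0)
          = ∑ i ∈ Finset.univ, (if i ∈ S then f (fun j => if i = j then 1 else 0) else 0) by
        apply Finset.sum_congr rfl
        intro i _
        by_cases h : i ∈ S <;> simp [hv, h]]
      rw [Finset.sum_ite_mem]
      simp
    have h2 : f x = ∑ i, x i * f (fun j => if i = j then 1 else 0) := hf x
    have h3 : f v < u := hfa v (subset_convexHull ℝ K hvK)
    have h4 : ∑ i, (fun i => f (fun j => if i = j then 1 else 0)) i * x i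
        = ∑ i, x i * f (fun j => if i = j then 1 else 0) := by
      apply Finset.sum_congr rfl
      intro i _
      ring
    rw [h4] at hle
    rw [← h2] at hle
    rw [← h1] at hle
    linarith
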